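/- Let E be a real vector space and β : E × E → ℝ a symmetric bilinear form which is Lorentzian: there exists v₀ ∈ E with β(v₀, v₀) > 0 such that β(x, x) < 0 for every x ≠ 0 with β(v₀, x) = 0. Then for all v, x ∈ E with β(v, v) ≥ 0, the inverse Cauchy–Schwarz inequality β(v, v) · β(x, x) ≤ β(x, v)² holds. -/

import Mathlib

/-- **Inverse Cauchy–Schwarz inequality** for a Lorentzian symmetric bilinear form:
if `β(v,v) ≥ 0`, then `β(v,v)·β(x,x) ≤ β(x,v)²`. -/
theorem lorentzian_inverse_cauchy_schwarz
    {E : Type*} [AddCommGroup E] [Module ℝ E]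
    (β : E →ₗ[ℝ] E →ₗ[ℝ] ℝ) (hsymm : ∀ x y : E, β x y = β y x)
    (v₀ : E) (hv₀ : 0 < β v₀ v₀)
    (hneg : ∀ x : E, x ≠ 0 → β v₀ x = 0 → β x x < 0)
    (v x : E) (hv : 0 ≤ β v v) :
    β v v * β x x ≤ (β x v) ^ 2 := by
  rcases eq_or_lt_of_le hv with hv0 | hvpos
  · rw [← hv0]
    simpa using sq_nonneg (β x v)
  -- Key: anything orthogonal to v has nonpositive norm
  have key : ∀ w : E, β v w = 0 → β w w ≤ 0 := by
    intro w hvw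
    by_contra hw
    push_neg at hw
    -- v, w are "positively independent"; build u in v₀^⊥ with β u u > 0
    set a : ℝ := β v₀ w with ha
    set b : ℝ := -(β v₀ v) with hb
    have hab : a ≠ 0 ∨ b ≠ 0 := by
      by_contra h
      push_neg at h
      obtain ⟨ha0, hb0⟩ := h
      have hv₀v : β v₀ v = 0 := by simpa [hb] using hb0
      have hvne : v ≠ 0 := by
        intro h0; rw [h0] at hvpos; simp at hvpos
      exact absurd (hneg v hvne hv₀v) (not_lt.mpr hv)
    set u : E := a • v + b • w with hu
    have hv₀u : β v₀ u = 0 := by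
      simp [hu, ha, hb]; ring
    have huu : β u u = a ^ 2 * β v v + b ^ 2 * β w w := by
      have hwv : β w v = 0 := by rw [hsymm]; exact hvw
      simp [hu, hvw, hwv]
      ring
    have huupos : 0 < β u u := by
      rw [huu]
      rcases hab with h | h
      · have : 0 < a ^ 2 * β v v := mul_pos (by positivity) hvpos
        nlinarith [sq_nonneg b, mul_nonneg (sq_nonneg b) hw.le]
      · have : 0 < b ^ 2 * β w w := mul_pos (by positivity) hw
        nlinarith [sq_nonneg a, mul_nonneg (sq_nonneg a) hvpos.le]
    have hune : u ≠ 0 := by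
      intro h0
      rw [h0] at huupos
      simp at huupos
    exact absurd (hneg u hune hv₀u) (not_lt.mpr huupos.le)
  -- Apply to w = x - (β x v / β v v) • v
  set c : ℝ := β x v / β v v with hc
  have hvw : β v (x - c • v) = 0 := by
    have : β v x = β x v := hsymm v x
    rw [map_sub, map_smul, smul_eq_mul, this, hc, div_mul_cancel₀ _ hvpos.ne', sub_self]
  have := key (x - c • v) hvw
  have hexp : β (x - c • v) (x - c • v)
      = β x x - 2 * c * β x v + c ^ 2 * β v v := by
    have hvx : β v x = β x v := hsymm v x
    simp [hvx]
    ring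
  rw [hexp] at this
  have hcv : c * β v v = β x v := by
    rw [hc, div_mul_cancel₀ _ hvpos.ne']
  nlinarith [this, hcv]
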